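/- Let k be an algebraically closed field, s ≥ 1, f_1,…,f_s, g ∈ k[X_0,X_1,…,X_s], and p ∈ k. Let Z := {ξ ∈ k^s : f_i(p,ξ)=0 for 1 ≤ i ≤ s}, and assume: Z is finite and nonempty; for every ξ ∈ Z one has g(p,ξ) ≠ 0 and det((∂f_i/∂X_j)(p,ξ))_{1≤i,j≤s} ≠ 0 (derivatives with respect to X_1,…,X_s); and the first coordinates ξ_1 of the points ξ ∈ Z are pairwise distinct. Let M ∈ k[X_0][T] be monic in T with deg_T M = #Z, and suppose M(X_0, X_1) lies in the ideal generated by f_1,…,f_s in the localization k[X_0,…,X_s]_g. For each ξ ∈ Z let R^ξ = (R^ξ_1,…,R^ξ_s) ∈ k⟦t⟧^s be the unique tuple of power series with f_i(p+t, R^ξ) = 0 for all i and constant terms equal to ξ. Then the following factorization holds in k⟦t⟧[T]: M(p+t, T) = ∏_{ξ ∈ Z} (T − R^ξ_1). -/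

import Mathlib

noncomputable section

open MvPolynomial

variable {k : Type*}

/-- Substitution `X₀ ↦ p + t`, `X_m ↦ R m` of a polynomial `f ∈ k[X₀, X₁, …, X_s]` into the
power series ring `k⟦t⟧`. -/
def psSubst [Field k] {s : ℕ} (p : k) (R : Fin s → PowerSeries k)
    (f : MvPolynomial (Fin (s + 1)) k) : PowerSeries k :=
  aeval (fun v : Fin (s + 1) =>
    Fin.cases (PowerSeries.C p + PowerSeries.X) R v) f

/-- The zero set `Z := {ξ ∈ k^s : f_i(p, ξ) = 0 for all i}`. -/
def zerFib [Field k] {s : ℕ} (f : Fin s → MvPolynomial (Fin (s + 1)) k) (p : k) :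
    Set (Fin s → k) :=
  {ξ | ∀ i : Fin s, eval (fun v : Fin (s + 1) => Fin.cases p ξ v) (f i) = 0}

/-- The image of a bivariate polynomial `M ∈ k[X₀][T]` in `k[X₀, …, X_s]`, substituting
`X₀` for the coefficient variable and `X₁` for `T`. -/
def biToMv [Field k] {s : ℕ} (M : Polynomial (Polynomial k)) :
    MvPolynomial (Fin (s + 1)) k :=
  Polynomial.eval₂
    ((Polynomial.aeval (MvPolynomial.X (0 : Fin (s + 1)) :
      MvPolynomial (Fin (s + 1)) k)).toRingHom)
    (MvPolynomial.X (1 : Fin (s + 1))) M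


lemma constantCoeff_psSubst [Field k] {s : ℕ} (p : k) (R : Fin s → PowerSeries k)
    (ξ : Fin s → k) (hc : ∀ m, PowerSeries.constantCoeff (R m) = ξ m)
    (f : MvPolynomial (Fin (s + 1)) k) :
    PowerSeries.constantCoeff (psSubst p R f)
      = eval (fun v : Fin (s + 1) => Fin.cases p ξ v) f := by
  rw [psSubst, aeval_def, eval₂_comp_left (PowerSeries.constantCoeff (R := k)), eval]
  congr 1
  ext a
  induction a using Fin.cases with
  | zero => simp
  | succ m => simp [hc]

lemma monic_dvd_eq {A : Type*} [CommRing A] [IsDomain A] {P Q : Polynomial A}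
    (hP : P.Monic) (hQ : Q.Monic) (hdvd : Q ∣ P) (hdeg : P.natDegree = Q.natDegree) :
    P = Q := by
  obtain ⟨c, hc⟩ := hdvd
  have hc0 : c ≠ 0 := by
    rintro rfl
    rw [mul_zero] at hc
    exact hP.ne_zero hc
  have hdn : P.natDegree = Q.natDegree + c.natDegree := by
    rw [hc, Polynomial.natDegree_mul hQ.ne_zero hc0]
  have hcdeg : c.natDegree = 0 := by omega
  obtain ⟨a, rfl⟩ := Polynomial.natDegree_eq_zero.mp hcdeg
  have ha : a = 1 := by
    have h := hP.leadingCoeff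
    rw [hc, Polynomial.leadingCoeff_mul, hQ.leadingCoeff, one_mul,
      Polynomial.leadingCoeff_C] at h
    exact h
  rw [hc, ha, map_one, mul_one]

/-- With `Z` finite and nonempty, `g` and the Jacobian determinant nonzero at
every point of `Z`, the first coordinates of the points of `Z` pairwise distinct, and
`M ∈ k[X₀][T]` monic of degree `#Z` in `T` with `M(X₀, X₁)` in the ideal generated by
`f₁,…,f_s` in `k[X₀,…,X_s]_g`, the polynomial `M(p+t, T)` factors as
`∏_{ξ ∈ Z} (T − R^ξ₁)` over `k⟦t⟧`, where `R^ξ` is the Newton–Hensel power series solution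
with constant term `ξ`. -/
theorem statement13 [Field k] [IsAlgClosed k] {s : ℕ} (hs : 1 ≤ s)
    (f : Fin s → MvPolynomial (Fin (s + 1)) k) (g : MvPolynomial (Fin (s + 1)) k)
    (p : k)
    (hZfin : (zerFib f p).Finite) (hZne : (zerFib f p).Nonempty)
    (hg : ∀ ξ ∈ zerFib f p, eval (fun v : Fin (s + 1) => Fin.cases p ξ v) g ≠ 0)
    (hjac : ∀ ξ ∈ zerFib f p, (Matrix.of fun i m : Fin s =>
      eval (fun v : Fin (s + 1) => Fin.cases p ξ v) (pderiv (Fin.succ m) (f i))).det ≠ 0)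
    (hsep : ∀ ξ ∈ zerFib f p, ∀ η ∈ zerFib f p, ξ ⟨0, hs⟩ = η ⟨0, hs⟩ → ξ = η)
    (M : Polynomial (Polynomial k)) (hM : M.Monic)
    (hMdeg : M.natDegree = hZfin.toFinset.card)
    (hMmem : algebraMap (MvPolynomial (Fin (s + 1)) k) (Localization.Away g)
        (biToMv M) ∈
      Ideal.span (Set.range fun i : Fin s =>
        algebraMap (MvPolynomial (Fin (s + 1)) k) (Localization.Away g) (f i)))
    -- `R ξ` is the unique power-series solution of `f(p+t, R) = 0` with constant term `ξ`
    (R : (Fin s → k) → Fin s → PowerSeries k)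
    (hR : ∀ ξ ∈ zerFib f p,
      (∀ i : Fin s, psSubst p (R ξ) (f i) = 0) ∧
      (∀ m : Fin s, PowerSeries.constantCoeff (R ξ m) = ξ m)) :
    Polynomial.map
        ((Polynomial.aeval (PowerSeries.C p + PowerSeries.X) :
          Polynomial k →ₐ[k] PowerSeries k).toRingHom) M =
      ∏ ξ ∈ hZfin.toFinset,
        (Polynomial.X - Polynomial.C (R ξ ⟨0, hs⟩)) := by
  classical
  set φ := ((Polynomial.aeval (PowerSeries.C p + PowerSeries.X) :
      Polynomial k →ₐ[k] PowerSeries k).toRingHom) with hφ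
  set P := Polynomial.map φ M with hPdef
  set S := hZfin.toFinset with hSdef
  set r : (Fin s → k) → PowerSeries k := fun ξ => R ξ ⟨0, hs⟩ with hrdef
  have hPmonic : P.Monic := hM.map φ
  have hPdeg : P.natDegree = S.card := by
    rw [hPdef, hM.natDegree_map, hMdeg]
  -- every r ξ is a root of P
  have hroot : ∀ ξ ∈ S, Polynomial.eval (r ξ) P = 0 := by
    intro ξ hξS
    have hξ : ξ ∈ zerFib f p := by rwa [hSdef, Set.Finite.mem_toFinset] at hξS
    set A := ((aeval (fun v : Fin (s + 1) =>
        Fin.cases (PowerSeries.C p + PowerSeries.X) (R ξ) v) :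
        MvPolynomial (Fin (s + 1)) k →ₐ[k] PowerSeries k).toRingHom :
        MvPolynomial (Fin (s + 1)) k →+* PowerSeries k) with hA
    have hAps : ∀ x, A x = psSubst p (R ξ) x := fun _ => rfl
    have hunit : IsUnit (A g) := by
      rw [PowerSeries.isUnit_iff_constantCoeff]
      rw [hAps, constantCoeff_psSubst p (R ξ) ξ (hR ξ hξ).2 g]
      exact (hg ξ hξ).isUnit
    set ψ := IsLocalization.Away.lift (S := Localization.Away g)
      (g := A) g hunit with hψ
    have hψeq : ∀ x, ψ (algebraMap (MvPolynomial (Fin (s + 1)) k)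
        (Localization.Away g) x) = A x := fun x => IsLocalization.Away.lift_eq g hunit x
    have key : A (biToMv M) = 0 := by
      have h1 := Ideal.mem_map_of_mem ψ hMmem
      rw [Ideal.map_span] at h1
      have h2 : (ψ '' (Set.range fun i : Fin s =>
          algebraMap (MvPolynomial (Fin (s + 1)) k) (Localization.Away g) (f i))) ⊆ {0} := by
        rintro - ⟨-, ⟨i, rfl⟩, rfl⟩
        rw [hψeq, hAps, (hR ξ hξ).1 i]
        rfl
      have h3 := Ideal.span_mono h2 h1
      rw [Ideal.span_singleton_eq_bot.mpr rfl, Ideal.mem_bot] at h3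
      rwa [hψeq] at h3
    have h1one : (1 : Fin (s + 1)) = Fin.succ ⟨0, hs⟩ := by
      apply Fin.ext
      simp [Fin.val_one, Nat.mod_eq_of_lt (by omega : 1 < s + 1)]
    have hAX1 : A (MvPolynomial.X (1 : Fin (s + 1))) = r ξ := by
      rw [hA]
      simp only [AlgHom.toRingHom_eq_coe, RingHom.coe_coe, aeval_X]
      rw [h1one]
      simp [hrdef]
    have hcomp : A.comp
        ((Polynomial.aeval (MvPolynomial.X (0 : Fin (s + 1)) :
          MvPolynomial (Fin (s + 1)) k)).toRingHom) = φ := by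
      apply Polynomial.ringHom_ext
      · intro a; simp [hφ, hA, algebraMap_eq]
      · simp [hφ, hA]
    calc Polynomial.eval (r ξ) P
        = Polynomial.eval₂ φ (r ξ) M := by rw [hPdef, Polynomial.eval_map]
      _ = A (biToMv M) := by
          rw [biToMv, Polynomial.hom_eval₂, hcomp, hAX1]
      _ = 0 := key
  -- injectivity of r on S
  have hinj : ∀ ξ ∈ S, ∀ η ∈ S, r ξ = r η → ξ = η := by
    intro ξ hξ η hη h
    rw [hSdef, Set.Finite.mem_toFinset] at hξ hη
    apply hsep ξ hξ η hη
    have h1 := (hR ξ hξ).2 ⟨0, hs⟩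
    have h2 := (hR η hη).2 ⟨0, hs⟩
    rw [← h1, ← h2]
    exact congrArg (PowerSeries.constantCoeff) h
  have hP0 : P ≠ 0 := hPmonic.ne_zero
  -- the multiset of first coordinates
  have hnodup : (S.val.map r).Nodup :=
    Multiset.Nodup.map_on (fun x hx y hy => hinj x hx y hy) S.nodup
  have hle : (S.val.map r) ≤ P.roots := by
    rw [Multiset.le_iff_subset hnodup]
    intro a ha
    obtain ⟨ξ, hξ, rfl⟩ := Multiset.mem_map.mp ha
    rw [Polynomial.mem_roots hP0]
    exact hroot ξ hξ
  set Q := ∏ ξ ∈ S, (Polynomial.X - Polynomial.C (r ξ)) with hQdef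
  have hQm : ((S.val.map r).map fun a => Polynomial.X - Polynomial.C a).prod = Q := by
    rw [hQdef, Finset.prod_eq_multiset_prod, Multiset.map_map]
    rfl
  have hQdvd : Q ∣ P := by
    rw [← hQm]
    exact (Multiset.prod_X_sub_C_dvd_iff_le_roots hP0 _).mpr hle
  have hQmonic : Q.Monic :=
    Polynomial.monic_prod_of_monic S _ (fun ξ _ => Polynomial.monic_X_sub_C _)
  have hQdeg : Q.natDegree = S.card := by
    rw [hQdef, Polynomial.natDegree_prod_of_monic S _
      (fun ξ _ => Polynomial.monic_X_sub_C _)]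
    simp [Polynomial.natDegree_X_sub_C]
  exact monic_dvd_eq hPmonic hQmonic hQdvd (by rw [hPdeg, hQdeg])
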